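/- Let f: ℝ → ℝ be differentiable. Then the infinitesimal similitude (Df)(x₀) = lim_{xₙ,yₙ→x₀, xₙ≠yₙ} |f(xₙ)-f(yₙ)|/|xₙ-yₙ| exists (independently of the sequences) if and only if |f'| is continuous at x₀. Moreover, when (Df)(x₀) exists, (Df)(x₀) = |f'(x₀)|. -/

import Mathlib

open Filter Topology

/-- `f` is an infinitesimal similitude at `x` with value `D`. -/
def IsInfSimAt {X Y : Type*} [MetricSpace X] [MetricSpace Y] (f : X → Y) (x : X) (D : ℝ) : Prop :=
  ∀ u v : ℕ → X, (∀ m, u m ≠ v m) →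
    Tendsto u atTop (𝓝 x) → Tendsto v atTop (𝓝 x) →
    Tendsto (fun m => dist (f (u m)) (f (v m)) / dist (u m) (v m)) atTop (𝓝 D)

-- quotient equals |slope|
lemma quot_eq_abs_slope (f : ℝ → ℝ) (a b : ℝ) :
    dist (f a) (f b) / dist a b = |slope f a b| := by
  rw [Real.dist_eq, Real.dist_eq, slope_def_field, abs_div, abs_sub_comm (f b), abs_sub_comm b]

-- MVT for a ≠ b
lemma mvt_ne (f : ℝ → ℝ) (hf : Differentiable ℝ f) {a b : ℝ} (hab : a ≠ b) :
    ∃ c, |c - a| ≤ |b - a| ∧ dist (f a) (f b) / dist a b = |deriv f c| := by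
  rcases lt_or_gt_of_ne hab with h | h
  · obtain ⟨c, hc, hce⟩ := exists_deriv_eq_slope' f h hf.continuous.continuousOn
      (fun x _ => (hf x).differentiableWithinAt)
    refine ⟨c, ?_, by rw [quot_eq_abs_slope, hce]⟩
    rw [abs_of_pos (by linarith [hc.1, hc.2] : (0:ℝ) < b - a), abs_of_pos (by linarith [hc.1])]
    linarith [hc.2]
  · obtain ⟨c, hc, hce⟩ := exists_deriv_eq_slope' f h hf.continuous.continuousOn
      (fun x _ => (hf x).differentiableWithinAt)
    refine ⟨c, ?_, by rw [quot_eq_abs_slope, hce, slope_comm]⟩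
    rw [abs_of_neg (by linarith [hc.1, hc.2] : b - a < 0), abs_of_neg (by linarith [hc.2])]
    linarith [hc.1]

lemma seq_to_punctured {u : ℕ → ℝ} {x₀ : ℝ} (hu : Tendsto u atTop (𝓝 x₀))
    (hne : ∀ m, u m ≠ x₀) : Tendsto u atTop (𝓝[≠] x₀) :=
  tendsto_nhdsWithin_iff.2 ⟨hu, Eventually.of_forall hne⟩

lemma value_eq (f : ℝ → ℝ) (hf : Differentiable ℝ f) (x₀ D : ℝ)
    (hD : IsInfSimAt f x₀ D) : D = |deriv f x₀| := by
  set u : ℕ → ℝ := fun m => x₀ + 1 / (m + 1) with hu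
  have hune : ∀ m, u m ≠ x₀ := by
    intro m
    have : (0:ℝ) < 1 / (m + 1) := by positivity
    simp only [hu]; intro h; nlinarith [h]
  have hul : Tendsto u atTop (𝓝 x₀) := by
    have := tendsto_one_div_add_atTop_nhds_zero_nat (𝕜 := ℝ)
    simpa [hu, one_div] using (tendsto_const_nhds (x := x₀) (f := atTop)).add this
  have h1 : Tendsto (fun m => dist (f (u m)) (f x₀) / dist (u m) x₀) atTop (𝓝 D) :=
    hD u (fun _ => x₀) hune hul tendsto_const_nhds
  have hslope : Tendsto (fun m => |slope f x₀ (u m)|) atTop (𝓝 |deriv f x₀|) := by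
    have h2 : Tendsto (slope f x₀) (𝓝[≠] x₀) (𝓝 (deriv f x₀)) :=
      hasDerivAt_iff_tendsto_slope.1 (hf x₀).hasDerivAt
    exact ((continuous_abs.tendsto _).comp (h2.comp (seq_to_punctured hul hune)))
  have heq : (fun m => dist (f (u m)) (f x₀) / dist (u m) x₀)
      = fun m => |slope f x₀ (u m)| := by
    funext m; rw [quot_eq_abs_slope, slope_comm]
  rw [heq] at h1
  exact tendsto_nhds_unique h1 hslope

/-- For a differentiable `f : ℝ → ℝ`, the infinitesimal similitude `(Df)(x₀)` exists iff
`|f'|` is continuous at `x₀`; moreover, whenever it exists, its value is `|f' x₀|`. -/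
theorem infSim_exists_iff_abs_deriv_continuousAt (f : ℝ → ℝ) (hf : Differentiable ℝ f)
    (x₀ : ℝ) :
    ((∃ D : ℝ, IsInfSimAt f x₀ D) ↔ ContinuousAt (fun x => |deriv f x|) x₀) ∧
    (∀ D : ℝ, IsInfSimAt f x₀ D → D = |deriv f x₀|) := by
  refine ⟨⟨?_, ?_⟩, fun D hD => value_eq f hf x₀ D hD⟩
  · rintro ⟨D, hD⟩
    have hDval : D = |deriv f x₀| := value_eq f hf x₀ D hD
    rw [ContinuousAt, tendsto_iff_seq_tendsto]
    intro x hx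
    -- choose y m close to x m with slope close to deriv
    have hch : ∀ m : ℕ, ∃ y : ℝ, y ≠ x m ∧ |y - x m| < 1 / (m + 1) ∧
        abs (|slope f (x m) y| - |deriv f (x m)|) < 1 / (m + 1) := by
      intro m
      have hpos : (0:ℝ) < 1 / (m + 1) := by positivity
      have h2 : Tendsto (slope f (x m)) (𝓝[≠] (x m)) (𝓝 (deriv f (x m))) :=
        hasDerivAt_iff_tendsto_slope.1 (hf (x m)).hasDerivAt
      have h3 : Tendsto (fun y => |slope f (x m) y|) (𝓝[≠] (x m)) (𝓝 |deriv f (x m)|) :=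
        (continuous_abs.tendsto _).comp h2
      have e1 : ∀ᶠ y in 𝓝[≠] (x m), abs (|slope f (x m) y| - |deriv f (x m)|) < 1 / (m + 1) := by
        have := (h3.eventually (eventually_abs_sub_lt _ hpos))
        exact this
      have e2 : ∀ᶠ y in 𝓝[≠] (x m), |y - x m| < 1 / (m + 1) := by
        apply eventually_nhdsWithin_of_eventually_nhds
        have : Tendsto (fun y : ℝ => y) (𝓝 (x m)) (𝓝 (x m)) := tendsto_id
        exact this.eventually (eventually_abs_sub_lt _ hpos)
      have e3 : ∀ᶠ y in 𝓝[≠] (x m), y ≠ x m := eventually_mem_nhdsWithin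
      obtain ⟨y, hy3, hy2, hy1⟩ := (e3.and (e2.and e1)).exists
      exact ⟨y, hy3, hy2, hy1⟩
    choose y hy1 hy2 hy3 using hch
    have hinv : Tendsto (fun m : ℕ => 1 / ((m:ℝ) + 1)) atTop (𝓝 0) :=
      tendsto_one_div_add_atTop_nhds_zero_nat
    have hyx : Tendsto y atTop (𝓝 x₀) := by
      have hdiff : Tendsto (fun m => y m - x m) atTop (𝓝 0) :=
        squeeze_zero_norm (fun m => (hy2 m).le) hinv
      have := hdiff.add hx
      simpa using this
    have hq : Tendsto (fun m => dist (f (y m)) (f (x m)) / dist (y m) (x m)) atTop (𝓝 D) :=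
      hD y x hy1 hyx hx
    have hqe : (fun m => dist (f (y m)) (f (x m)) / dist (y m) (x m))
        = fun m => |slope f (x m) (y m)| := by
      funext m; rw [quot_eq_abs_slope, slope_comm]
    rw [hqe] at hq
    have hdz : Tendsto (fun m => |slope f (x m) (y m)| - |deriv f (x m)|) atTop (𝓝 0) :=
      squeeze_zero_norm (fun m => (hy3 m).le) hinv
    have : Tendsto (fun m => |slope f (x m) (y m)|
        - (|slope f (x m) (y m)| - |deriv f (x m)|)) atTop (𝓝 (D - 0)) := hq.sub hdz
    simpa [hDval, Function.comp_def] using this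
  · intro hcont
    refine ⟨|deriv f x₀|, ?_⟩
    intro u v hne hu hv
    have hch : ∀ m, ∃ c, |c - u m| ≤ |v m - u m| ∧
        dist (f (u m)) (f (v m)) / dist (u m) (v m) = |deriv f c| :=
      fun m => mvt_ne f hf (hne m)
    choose c hc1 hc2 using hch
    have hcx : Tendsto c atTop (𝓝 x₀) := by
      have hdu : Tendsto (fun m => u m - x₀) atTop (𝓝 0) := by
        simpa using hu.sub (tendsto_const_nhds (x := x₀) (f := atTop))
      have hdv : Tendsto (fun m => v m - x₀) atTop (𝓝 0) := by
        simpa using hv.sub (tendsto_const_nhds (x := x₀) (f := atTop))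
      have hbound : Tendsto (fun m => |v m - u m| + |u m - x₀|) atTop (𝓝 0) := by
        have h1 : Tendsto (fun m => v m - u m) atTop (𝓝 0) := by
          have := hdv.sub hdu; simpa using this
        have := (h1.abs.add hdu.abs)
        simpa using this
      have hle : ∀ m, |c m - x₀| ≤ |v m - u m| + |u m - x₀| := by
        intro m
        calc |c m - x₀| = |(c m - u m) + (u m - x₀)| := by ring_nf
          _ ≤ |c m - u m| + |u m - x₀| := abs_add_le _ _
          _ ≤ |v m - u m| + |u m - x₀| := by linarith [hc1 m]
      have : Tendsto (fun m => c m - x₀) atTop (𝓝 0) :=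
        squeeze_zero_norm hle hbound
      have := this.add (tendsto_const_nhds (x := x₀) (f := atTop))
      simpa using this
    have : Tendsto (fun m => |deriv f (c m)|) atTop (𝓝 |deriv f x₀|) :=
      hcont.tendsto.comp hcx
    simpa [hc2] using this
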